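/- arXiv:1809.08824 — 3 statements merged into one kernel-verified Lean document; each statement's English description precedes it below -/
import Mathlib

section
/- Let γ ∈ ℂ and let ζ ∈ ℂ be a square root of γ (ζ² = γ). Let p₂ ∈ ℂ with p₂ ≠ 0, set D := (1 + γ)(1 − p₂²) + 2ζ(1 + p₂²) and assume D ≠ 0. Then complex numbers R, T, T_M, R_M satisfy the four interface equations (i) T_M + R_M = 1 + R, (ii) T = p₂·T_M + p₂⁻¹·R_M, (iii) ζ·(T_M − R_M) = 1 − R, (iv) T = ζ·(p₂·T_M − p₂⁻¹·R_M), if and only if R = (1 − γ)(1 − p₂²)/D, T_M = 2(1 + ζ)/D, R_M = −2p₂²(1 − ζ)/D, and T = 4p₂·ζ/D. -/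
/-- Transmission and reflection coefficients for the rotated metal cylinder Σ₂
(perfect conductor case): the four interface equations determine
`R`, `T`, `T_M`, `R_M` uniquely, with the closed formulas given. -/
theorem stmt1 (γ ζ p₂ R T TM RM : ℂ)
    (hζ : ζ ^ 2 = γ) (hp : p₂ ≠ 0) (D : ℂ)
    (hD : D = (1 + γ) * (1 - p₂ ^ 2) + 2 * ζ * (1 + p₂ ^ 2))
    (hD0 : D ≠ 0) :
    (TM + RM = 1 + R ∧
     T = p₂ * TM + p₂⁻¹ * RM ∧
     ζ * (TM - RM) = 1 - R ∧
     T = ζ * (p₂ * TM - p₂⁻¹ * RM)) ↔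
    (R = (1 - γ) * (1 - p₂ ^ 2) / D ∧
     TM = 2 * (1 + ζ) / D ∧
     RM = -(2 * p₂ ^ 2 * (1 - ζ)) / D ∧
     T = 4 * p₂ * ζ / D) := by
  subst hζ
  constructor
  · rintro ⟨h1, h2, h3, h4⟩
    field_simp [hp] at h2 h4
    have h2' : T * p₂ = p₂ ^ 2 * TM + RM := by linear_combination h2
    have h4' : T * p₂ = ζ * (p₂ ^ 2 * TM - RM) := by linear_combination h4
    have hTM : TM * D = 2 * (1 + ζ) := by
      rw [hD]
      linear_combination (1 + ζ) * h1 + (1 + ζ) * h3 + (1 - ζ) * h2' - (1 - ζ) * h4'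
    have hRM : RM * D = -(2 * p₂ ^ 2 * (1 - ζ)) := by
      rw [hD]
      linear_combination (1 + ζ) * h4' - (1 + ζ) * h2' - (1 - ζ) * p₂ ^ 2 * h1
        - (1 - ζ) * p₂ ^ 2 * h3
    have hR : R * D = (1 - ζ ^ 2) * (1 - p₂ ^ 2) := by
      rw [hD] at hTM hRM ⊢
      linear_combination hTM + hRM
        - ((1 + ζ ^ 2) * (1 - p₂ ^ 2) + 2 * ζ * (1 + p₂ ^ 2)) * h1
    have hT' : T * D * p₂ = 4 * p₂ * ζ * p₂ := by
      linear_combination D * h2' + p₂ ^ 2 * hTM + hRM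
    have hT : T * D = 4 * p₂ * ζ := mul_right_cancel₀ hp hT'
    exact ⟨(eq_div_iff hD0).2 hR, (eq_div_iff hD0).2 hTM,
      (eq_div_iff hD0).2 hRM, (eq_div_iff hD0).2 hT⟩
  · rintro ⟨hR, hTM, hRM, hT⟩
    subst hR hTM hRM hT
    refine ⟨?_, ?_, ?_, ?_⟩ <;> field_simp <;> subst hD <;> ring
end

section
/- Let α > 0 be a real number, let p₀ ∈ ℂ with p₀ ≠ 0, set D := (1 + α²)(1 − p₀²) + 2α(1 + p₀²) and assume D ≠ 0. Then complex numbers R, T, T_M, R_M satisfy the four interface equations (i) T_M + R_M = 1 + R, (ii) T = p₀·T_M + p₀⁻¹·R_M, (iii) α⁻¹·(T_M − R_M) = 1 − R, (iv) T = α⁻¹·(p₀·T_M − p₀⁻¹·R_M), if and only if R = (α² − 1)(1 − p₀²)/D, T_M = 2α(α + 1)/D, R_M = −2α·p₀²·(α − 1)/D, and T = 4p₀·α/D. -/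
/-- Transmission and reflection coefficients for the metal plate Σ₃
(perfect conductor case): the four interface equations determine
`R`, `T`, `T_M`, `R_M` uniquely, with the closed formulas given. -/
theorem stmt2 (α : ℝ) (hα : 0 < α) (p₀ R T TM RM : ℂ)
    (hp : p₀ ≠ 0) (D : ℂ)
    (hD : D = (1 + (α : ℂ) ^ 2) * (1 - p₀ ^ 2) + 2 * (α : ℂ) * (1 + p₀ ^ 2))
    (hD0 : D ≠ 0) :
    (TM + RM = 1 + R ∧
     T = p₀ * TM + p₀⁻¹ * RM ∧
     ((α : ℂ))⁻¹ * (TM - RM) = 1 - R ∧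
     T = ((α : ℂ))⁻¹ * (p₀ * TM - p₀⁻¹ * RM)) ↔
    (R = ((α : ℂ) ^ 2 - 1) * (1 - p₀ ^ 2) / D ∧
     TM = 2 * (α : ℂ) * ((α : ℂ) + 1) / D ∧
     RM = -(2 * (α : ℂ) * p₀ ^ 2 * ((α : ℂ) - 1)) / D ∧
     T = 4 * p₀ * (α : ℂ) / D) := by
  have ha : (α : ℂ) ≠ 0 := by exact_mod_cast hα.ne'
  subst hD
  set a : ℂ := (α : ℂ) with ha'
  constructor
  · rintro ⟨h1, h2, h3, h4⟩
    field_simp at h2 h3 h4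
    -- h1 : TM + RM = 1 + R
    -- h2 : T * p₀ = p₀ * TM * p₀ + RM
    -- h3 : TM - RM = (1 - R) * a
    -- h4 : T * (a * p₀) = p₀ * TM * p₀ - RM
    have hR : R * ((1 + a ^ 2) * (1 - p₀ ^ 2) + 2 * a * (1 + p₀ ^ 2))
        = (a ^ 2 - 1) * (1 - p₀ ^ 2) := by
      linear_combination ((1 - a) * p₀ ^ 2 - (1 + a)) * h1 + (-2 * a) * h2 +
        ((1 - a) * p₀ ^ 2 + (1 + a)) * h3 + 2 * h4
    have hTM : TM * ((1 + a ^ 2) * (1 - p₀ ^ 2) + 2 * a * (1 + p₀ ^ 2))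
        = 2 * a * (a + 1) := by
      linear_combination
        (((1 + a ^ 2) * (1 - p₀ ^ 2) + 2 * a * (1 + p₀ ^ 2)) / 2
          + (1 - a) / 2 * ((1 - a) * p₀ ^ 2 - (1 + a))) * h1
        + ((1 - a) / 2 * (-2 * a)) * h2
        + (((1 + a ^ 2) * (1 - p₀ ^ 2) + 2 * a * (1 + p₀ ^ 2)) / 2
          + (1 - a) / 2 * ((1 - a) * p₀ ^ 2 + (1 + a))) * h3
        + (1 - a) * h4
    have hRM : RM * ((1 + a ^ 2) * (1 - p₀ ^ 2) + 2 * a * (1 + p₀ ^ 2))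
        = -(2 * a * p₀ ^ 2 * (a - 1)) := by
      linear_combination
        (((1 + a ^ 2) * (1 - p₀ ^ 2) + 2 * a * (1 + p₀ ^ 2)) / 2
          + (1 + a) / 2 * ((1 - a) * p₀ ^ 2 - (1 + a))) * h1
        + ((1 + a) / 2 * (-2 * a)) * h2
        + (-((1 + a ^ 2) * (1 - p₀ ^ 2) + 2 * a * (1 + p₀ ^ 2)) / 2
          + (1 + a) / 2 * ((1 - a) * p₀ ^ 2 + (1 + a))) * h3
        + (1 + a) * h4
    have hTp : T * p₀ * ((1 + a ^ 2) * (1 - p₀ ^ 2) + 2 * a * (1 + p₀ ^ 2))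
        = 4 * a * p₀ ^ 2 := by
      linear_combination (2 * a * p₀ ^ 2) * h1 + ((1 + a) - p₀ ^ 2 * (1 - a)) * h2 +
        (2 * p₀ ^ 2) * h3 + ((1 + a) + p₀ ^ 2 * (1 - a)) * h4
    have hT : T * ((1 + a ^ 2) * (1 - p₀ ^ 2) + 2 * a * (1 + p₀ ^ 2)) = 4 * p₀ * a := by
      apply mul_right_cancel₀ hp
      linear_combination hTp
    exact ⟨(eq_div_iff hD0).2 hR, (eq_div_iff hD0).2 hTM,
      (eq_div_iff hD0).2 hRM, (eq_div_iff hD0).2 hT⟩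
  · rintro ⟨hR, hTM, hRM, hT⟩
    subst hR hTM hRM hT
    generalize hDD : (1 + a ^ 2) * (1 - p₀ ^ 2) + 2 * a * (1 + p₀ ^ 2) = D at *
    refine ⟨?_, ?_, ?_, ?_⟩ <;> field_simp <;> subst hDD <;> ring
end

section
/- Let (Ω, μ) be a measure space with μ(Ω) < ∞, let α ∈ (0,1), let u_n, u ∈ L²(Ω, μ; ℂ), and let A_n ⊆ Ω be measurable sets. Assume: (a) u_n → u strongly in L²(Ω, μ; ℂ); (b) the indicator functions 1_{Ω∖A_n} converge weakly in L²(Ω, μ; ℝ) to the constant function α (i.e. ∫_Ω 1_{Ω∖A_n}·g dμ → α·∫_Ω g dμ for every g ∈ L²(Ω, μ; ℝ)); (c) ‖1_{A_n}·u_n‖_{L²} → 0. Then u = 0 μ-almost everywhere in Ω. -/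
open MeasureTheory Filter Topology

-- Cauchy-Schwarz for integrals of products of L² complex functions
lemma l2_mul_integrable {Ω : Type*} [MeasurableSpace Ω] {μ : Measure Ω} {f g : Ω → ℂ}
    (hf : MemLp f 2 μ) (hg : MemLp g 2 μ) :
    Integrable (fun x => f x * g x) μ := by
  have hcf : MemLp (fun x => (starRingEnd ℂ) (f x)) 2 μ :=
    MemLp.of_le hf (RCLike.continuous_conj.comp_aestronglyMeasurable hf.1)
      (Eventually.of_forall fun x => by simp)
  have := L2.integrable_inner (𝕜 := ℂ) (hcf.toLp _) (hg.toLp g)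
  refine this.congr ?_
  filter_upwards [hcf.coeFn_toLp, hg.coeFn_toLp] with x h1 h2
  simp [RCLike.inner_apply, h1, h2, mul_comm]

lemma l2_mul_norm_integral_le {Ω : Type*} [MeasurableSpace Ω] {μ : Measure Ω} {f g : Ω → ℂ}
    (hf : MemLp f 2 μ) (hg : MemLp g 2 μ) :
    ‖∫ x, f x * g x ∂μ‖ ≤ (eLpNorm f 2 μ).toReal * (eLpNorm g 2 μ).toReal := by
  have hcf : MemLp (fun x => (starRingEnd ℂ) (f x)) 2 μ :=
    MemLp.of_le hf (RCLike.continuous_conj.comp_aestronglyMeasurable hf.1)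
      (Eventually.of_forall fun x => by simp)
  have h1 : (inner (𝕜 := ℂ) (hcf.toLp _) (hg.toLp g) : ℂ) = ∫ x, f x * g x ∂μ := by
    rw [L2.inner_def]
    refine integral_congr_ae ?_
    filter_upwards [hcf.coeFn_toLp, hg.coeFn_toLp] with x h1 h2
    simp [RCLike.inner_apply, h1, h2, mul_comm]
  have h2 := norm_inner_le_norm (𝕜 := ℂ) (hcf.toLp _) (hg.toLp g)
  rw [h1] at h2
  rwa [Lp.norm_toLp, Lp.norm_toLp, eLpNorm_congr_norm_ae
    (Eventually.of_forall fun x => by simp : ∀ᵐ x ∂μ, ‖(starRingEnd ℂ) (f x)‖ = ‖f x‖)] at h2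

/-- Core of the lemma on trivial limits for parallel electric fields:
if `u_n → u` strongly in `L²`, the indicators of the complements
`Ω ∖ A_n` converge weakly in `L²` to the constant `α ∈ (0,1)`, and
`‖1_{A_n} u_n‖_{L²} → 0`, then `u = 0` almost everywhere. -/
theorem stmt6 {Ω : Type*} [MeasurableSpace Ω] (μ : Measure Ω)
    [IsFiniteMeasure μ]
    (α : ℝ) (hα : α ∈ Set.Ioo (0 : ℝ) 1)
    (u : ℕ → Ω → ℂ) (ulim : Ω → ℂ)
    (hu : ∀ n, MemLp (u n) 2 μ) (hulim : MemLp ulim 2 μ)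
    (A : ℕ → Set Ω) (hA : ∀ n, MeasurableSet (A n))
    (ha : Tendsto (fun n => eLpNorm (u n - ulim) 2 μ) atTop (𝓝 0))
    (hb : ∀ g : Ω → ℝ, MemLp g 2 μ →
      Tendsto
        (fun n => ∫ x, (Set.indicator (A n)ᶜ (fun _ => (1 : ℝ)) x) * g x ∂μ)
        atTop (𝓝 (α * ∫ x, g x ∂μ)))
    (hc : Tendsto (fun n => eLpNorm (Set.indicator (A n) (u n)) 2 μ)
        atTop (𝓝 0)) :
    ulim =ᵐ[μ] 0 := by
  set φ : Ω → ℂ := fun x => (starRingEnd ℂ) (ulim x) / ((1 + ‖ulim x‖ : ℝ) : ℂ) with hφdef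
  set g : Ω → ℝ := fun x => ‖ulim x‖ ^ 2 / (1 + ‖ulim x‖) with hgdef
  have hden : ∀ x, (0 : ℝ) < 1 + ‖ulim x‖ := fun x => by positivity
  -- pointwise identity
  have hpoint : ∀ x, ulim x * φ x = ((g x : ℝ) : ℂ) := by
    intro x
    simp only [hφdef, hgdef, mul_div_assoc']
    rw [Complex.mul_conj, Complex.ofReal_div]
    congr 2
    rw [Complex.normSq_eq_norm_sq]
  -- MemLp facts
  have hφmeas : AEStronglyMeasurable φ μ := by
    have hG : Continuous (fun z : ℂ => (starRingEnd ℂ) z / ((1 + ‖z‖ : ℝ) : ℂ)) := by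
      refine Continuous.div RCLike.continuous_conj
        (Complex.continuous_ofReal.comp (continuous_const.add continuous_norm)) ?_
      intro z
      exact_mod_cast Complex.ofReal_ne_zero.mpr (ne_of_gt (by positivity))
    exact hG.comp_aestronglyMeasurable hulim.1
  have hφ : MemLp φ 2 μ := by
    refine MemLp.of_bound hφmeas 1 (Eventually.of_forall fun x => ?_)
    simp only [hφdef, norm_div, RCLike.norm_conj, Complex.norm_real, Real.norm_eq_abs,
      abs_of_pos (hden x)]
    rw [div_le_one (hden x)]
    linarith
  have hgmeas : AEStronglyMeasurable g μ := by
    have : Continuous (fun z : ℂ => ‖z‖ ^ 2 / (1 + ‖z‖)) := by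
      apply Continuous.div ((continuous_norm).pow 2) (continuous_const.add continuous_norm)
      intro z; exact ne_of_gt (add_pos_of_pos_of_nonneg one_pos (norm_nonneg z))
    exact this.comp_aestronglyMeasurable hulim.1
  have hgbound : ∀ x, ‖g x‖ ≤ ‖ulim x‖ := by
    intro x
    rw [hgdef]
    simp only
    rw [Real.norm_eq_abs, abs_div, abs_of_pos (hden x), abs_of_nonneg (by positivity)]
    rw [div_le_iff₀ (hden x)]
    nlinarith [norm_nonneg (ulim x)]
  have hg : MemLp g 2 μ := MemLp.of_le hulim hgmeas (Eventually.of_forall hgbound)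
  -- the three integral sequences
  set P : ℕ → ℂ := fun n => ∫ x, u n x * φ x ∂μ with hPdef
  set Q : ℕ → ℂ := fun n => ∫ x, Set.indicator (A n) (u n) x * φ x ∂μ with hQdef
  set R : ℕ → ℂ := fun n => ∫ x, Set.indicator (A n)ᶜ (u n) x * φ x ∂μ with hRdef
  have hPQR : ∀ n, P n = Q n + R n := by
    intro n
    rw [hPdef, hQdef, hRdef]
    simp only
    rw [← integral_add (l2_mul_integrable ((hu n).indicator (hA n)) hφ)
      (l2_mul_integrable ((hu n).indicator (hA n).compl) hφ)]
    refine integral_congr_ae (Eventually.of_forall fun x => ?_)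
    simp only [← add_mul]
    congr 1
    by_cases hx : x ∈ A n
    · rw [Set.indicator_of_mem hx, Set.indicator_of_notMem (Set.notMem_compl_iff.mpr hx),
        add_zero]
    · rw [Set.indicator_of_notMem hx, Set.indicator_of_mem (Set.mem_compl hx), zero_add]
  -- limit of eLpNorm toReal
  have haR : Tendsto (fun n => (eLpNorm (u n - ulim) 2 μ).toReal) atTop (𝓝 0) := by
    have := (ENNReal.tendsto_toReal (by simp)).comp ha
    simpa [Function.comp_def] using this
  have hcR : Tendsto (fun n => (eLpNorm (Set.indicator (A n) (u n)) 2 μ).toReal) atTop (𝓝 0) := by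
    have := (ENNReal.tendsto_toReal (by simp)).comp hc
    simpa [Function.comp_def] using this
  set C : ℝ := (eLpNorm φ 2 μ).toReal with hCdef
  -- P tends to ∫ ulim φ
  have hP : Tendsto P atTop (𝓝 (∫ x, ulim x * φ x ∂μ)) := by
    rw [← tendsto_sub_nhds_zero_iff]
    rw [tendsto_zero_iff_norm_tendsto_zero]
    refine squeeze_zero (fun n => norm_nonneg _)
      (fun n => ?_) (by simpa using haR.mul_const C)
    have heq : P n - ∫ x, ulim x * φ x ∂μ = ∫ x, (u n - ulim) x * φ x ∂μ := by
      rw [hPdef]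
      simp only
      rw [← integral_sub (l2_mul_integrable (hu n) hφ) (l2_mul_integrable hulim hφ)]
      refine integral_congr_ae (Eventually.of_forall fun x => ?_)
      simp [sub_mul]
    rw [heq]
    exact l2_mul_norm_integral_le ((hu n).sub hulim) hφ
  -- Q tends to 0
  have hQ : Tendsto Q atTop (𝓝 0) := by
    rw [tendsto_zero_iff_norm_tendsto_zero]
    refine squeeze_zero (fun n => norm_nonneg _) (fun n => ?_) (by simpa using hcR.mul_const C)
    exact l2_mul_norm_integral_le ((hu n).indicator (hA n)) hφ
  -- R tends to ↑(α * ∫ g)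
  have hRsplit : ∀ n, R n = (∫ x, Set.indicator (A n)ᶜ (u n - ulim) x * φ x ∂μ)
      + ((∫ x, (Set.indicator (A n)ᶜ (fun _ => (1 : ℝ)) x) * g x ∂μ : ℝ) : ℂ) := by
    intro n
    have h2 : ((∫ x, (Set.indicator (A n)ᶜ (fun _ => (1 : ℝ)) x) * g x ∂μ : ℝ) : ℂ)
        = ∫ x, Set.indicator (A n)ᶜ ulim x * φ x ∂μ := by
      refine Eq.trans (integral_ofReal (μ := μ) (𝕜 := ℂ)
        (f := fun x => Set.indicator (A n)ᶜ (fun _ => (1 : ℝ)) x * g x)).symm ?_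
      refine integral_congr_ae (Eventually.of_forall fun x => ?_)
      by_cases hx : x ∈ (A n)ᶜ
      · simp only [Set.indicator_of_mem hx, one_mul, hpoint x, Complex.ofReal_mul,
          Complex.ofReal_one]
        rfl
      · simp [Set.indicator_of_notMem hx]
    rw [h2, hRdef]
    simp only
    rw [← integral_add
      (l2_mul_integrable (((hu n).sub hulim).indicator (hA n).compl) hφ)
      (l2_mul_integrable (hulim.indicator (hA n).compl) hφ)]
    refine integral_congr_ae (Eventually.of_forall fun x => ?_)
    simp only [← add_mul]
    congr 1
    by_cases hx : x ∈ (A n)ᶜ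
    · simp [Set.indicator_of_mem hx]
    · simp [Set.indicator_of_notMem hx]
  have hR : Tendsto R atTop (𝓝 (((α * ∫ x, g x ∂μ : ℝ) : ℂ))) := by
    have h1 : Tendsto (fun n => ∫ x, Set.indicator (A n)ᶜ (u n - ulim) x * φ x ∂μ)
        atTop (𝓝 0) := by
      rw [tendsto_zero_iff_norm_tendsto_zero]
      refine squeeze_zero (fun n => norm_nonneg _) (fun n => ?_) (by simpa using haR.mul_const C)
      refine le_trans (l2_mul_norm_integral_le (((hu n).sub hulim).indicator (hA n).compl) hφ) ?_
      exact mul_le_mul_of_nonneg_right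
        (ENNReal.toReal_mono ((hu n).sub hulim).eLpNorm_ne_top (eLpNorm_indicator_le _))
        ENNReal.toReal_nonneg
    have h2 : Tendsto (fun n => ((∫ x, (Set.indicator (A n)ᶜ (fun _ => (1 : ℝ)) x) * g x ∂μ : ℝ) : ℂ))
        atTop (𝓝 ((α * ∫ x, g x ∂μ : ℝ) : ℂ)) :=
      (Complex.continuous_ofReal.tendsto _).comp (hb g hg)
    have := h1.add h2
    rw [zero_add] at this
    refine this.congr fun n => (hRsplit n).symm
  -- combine
  have hP' : Tendsto P atTop (𝓝 (((∫ x, g x ∂μ : ℝ) : ℂ))) := by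
    have : (∫ x, ulim x * φ x ∂μ) = ((∫ x, g x ∂μ : ℝ) : ℂ) := by
      refine Eq.trans ?_ (integral_ofReal (μ := μ) (𝕜 := ℂ) (f := g))
      exact integral_congr_ae (Eventually.of_forall fun x => hpoint x)
    rwa [this] at hP
  have hP'' : Tendsto P atTop (𝓝 (0 + ((α * ∫ x, g x ∂μ : ℝ) : ℂ))) := by
    refine ((hQ.add hR).congr fun n => (hPQR n).symm)
  have heq : ((∫ x, g x ∂μ : ℝ) : ℂ) = ((α * ∫ x, g x ∂μ : ℝ) : ℂ) := by
    have := tendsto_nhds_unique hP' hP''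
    rwa [zero_add] at this
  have heqR : (∫ x, g x ∂μ) = α * ∫ x, g x ∂μ := by exact_mod_cast heq
  have hint0 : (∫ x, g x ∂μ) = 0 := by
    have h1 : (1 - α) * ∫ x, g x ∂μ = 0 := by linear_combination heqR
    rcases mul_eq_zero.1 h1 with h | h
    · exact absurd h (by linarith [hα.2])
    · exact h
  have hgzero : g =ᵐ[μ] 0 := by
    have hnn : 0 ≤ᵐ[μ] g := Eventually.of_forall fun x => by
      rw [hgdef]; positivity
    exact (integral_eq_zero_iff_of_nonneg_ae hnn (hg.integrable one_le_two)).1 hint0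
  filter_upwards [hgzero] with x hx
  rw [hgdef] at hx
  simp only [Pi.zero_apply] at hx ⊢
  have h0 : ‖ulim x‖ ^ 2 = 0 := by
    have := hden x
    field_simp at hx
    simpa using hx
  simpa using pow_eq_zero_iff (n := 2) (by norm_num) |>.1 h0
end
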